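/- If a Borel set S in a complete metric linear space admits an essentially transverse measure — a measure μ, finite and positive on some compact set, such that μ(S + v) = 0 for a prevalent set of v — then S is shy. -/

import Mathlib

open MeasureTheory Set

set_option linter.unusedSectionVars false

variable {V : Type*} [AddCommGroup V] [Module ℝ V] [MetricSpace V] [CompleteSpace V]
  [IsTopologicalAddGroup V] [ContinuousSMul ℝ V] [MeasurableSpace V] [BorelSpace V]

/-- A set `S` is shy if it is contained in a Borel set admitting a transverse measure. -/
def Shy (S : Set V) : Prop :=
  ∃ T : Set V, S ⊆ T ∧ MeasurableSet T ∧
    ∃ μ : Measure V, (∃ U : Set V, IsCompact U ∧ 0 < μ U ∧ μ U < ⊤) ∧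
      ∀ v : V, μ ((fun x => x + v) '' T) = 0

/-- A set is prevalent if its complement is shy. -/
def Prevalent (S : Set V) : Prop := Shy Sᶜ

theorem key_meas (μ₁ : Measure V) [IsFiniteMeasure μ₁] {U : Set V} (hU : IsCompact U)
    (h0 : μ₁ Uᶜ = 0) :
    ∀ ⦃E : Set V⦄, MeasurableSet E →
      Measurable (fun y : V => μ₁ ((fun x => x + y) ⁻¹' E)) := by
  apply MeasurableSpace.induction_on_inter
    (C := fun E _ => Measurable fun y : V => μ₁ ((fun x => x + y) ⁻¹' E))
    (BorelSpace.measurable_eq.trans borel_eq_generateFrom_isClosed) isPiSystem_isClosed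
  · simp [measurable_const]
  · -- closed sets
    intro E hEc
    simp only [mem_setOf_eq] at hEc
    apply measurable_of_Iio
    intro c
    suffices h : IsOpen {y : V | μ₁ ((fun x => x + y) ⁻¹' E) < c} from h.measurableSet
    rw [isOpen_iff_mem_nhds]
    intro y hy
    simp only [mem_setOf_eq, mem_preimage] at hy
    set A := (fun x => x + y) ⁻¹' E with hA
    have hAc : IsClosed A := hEc.preimage (continuous_add_right y)
    obtain ⟨r, hrc, hr0⟩ : ∃ r, μ₁ (Metric.thickening r A) < c ∧ r ∈ Ioi (0:ℝ) := by
      have ht := tendsto_measure_thickening_of_isClosed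
        (μ := μ₁) ⟨1, one_pos, measure_ne_top μ₁ _⟩ hAc
      exact ((ht.eventually_lt_const hy).and eventually_mem_nhdsWithin).exists
    set O := Metric.thickening r A with hO
    have hAO : A ⊆ O := Metric.self_subset_thickening hr0 A
    have hKO : IsCompact (U \ O) := hU.diff Metric.isOpen_thickening
    have hsub : (U \ O) ×ˢ ({y} : Set V) ⊆ (fun p : V × V => p.1 + p.2) ⁻¹' Eᶜ := by
      rintro ⟨x, y'⟩ ⟨⟨hxU, hxO⟩, hy'⟩
      simp only [mem_singleton_iff] at hy'
      subst hy'
      intro hmem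
      exact hxO (hAO hmem)
    obtain ⟨u, v, huo, hvo, hKu, hyv, huv⟩ :=
      generalized_tube_lemma hKO isCompact_singleton
        (hEc.isOpen_compl.preimage continuous_add) hsub
    refine Filter.mem_of_superset (hvo.mem_nhds (hyv rfl)) ?_
    intro y' hy'
    have hsub2 : (fun x => x + y') ⁻¹' E ⊆ O ∪ Uᶜ := by
      intro x hx
      by_cases hxO : x ∈ O
      · exact Or.inl hxO
      · refine Or.inr fun hxU => ?_
        exact huv (⟨hKu ⟨hxU, hxO⟩, hy'⟩ : (x, y') ∈ u ×ˢ v) hx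
    calc μ₁ ((fun x => x + y') ⁻¹' E) ≤ μ₁ (O ∪ Uᶜ) := measure_mono hsub2
      _ ≤ μ₁ O + μ₁ Uᶜ := measure_union_le _ _
      _ = μ₁ O := by rw [h0, add_zero]
      _ < c := hrc
  · -- complements
    intro E hEm hC
    have heq : (fun y : V => μ₁ ((fun x => x + y) ⁻¹' Eᶜ))
        = fun y => μ₁ univ - μ₁ ((fun x => x + y) ⁻¹' E) := by
      funext y
      rw [preimage_compl,
        measure_compl (hEm.preimage (continuous_add_right y).measurable) (measure_ne_top _ _)]
    rw [heq]
    exact measurable_const.sub hC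
  · -- disjoint unions
    intro f hdisj hm hC
    have heq : (fun y : V => μ₁ ((fun x => x + y) ⁻¹' ⋃ i, f i))
        = fun y => ∑' i, μ₁ ((fun x => x + y) ⁻¹' f i) := by
      funext y
      rw [preimage_iUnion, measure_iUnion
        (fun i j hij => (hdisj hij).preimage _)
        (fun i => (hm i).preimage (continuous_add_right y).measurable)]
    rw [heq]
    exact Measurable.ennreal_tsum hC

theorem image_add_eq_preimage (S : Set V) (v : V) :
    (fun x => x + v) '' S = (fun x => x - v) ⁻¹' S := by
  ext x
  constructor
  · rintro ⟨s, hs, rfl⟩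
    simpa [add_sub_cancel_right] using hs
  · intro hx
    exact ⟨x - v, hx, sub_add_cancel _ _⟩

/-- If a Borel set `S` admits an essentially transverse measure — a measure positive
and finite on some compact set such that `μ(S + v) = 0` for a prevalent set of `v` —
then `S` is shy. -/
theorem stmt_6 (S : Set V) (hS : MeasurableSet S)
    (h : ∃ μ : Measure V, (∃ U : Set V, IsCompact U ∧ 0 < μ U ∧ μ U < ⊤) ∧
      Prevalent {v : V | μ ((fun x => x + v) '' S) = 0}) :
    Shy S := by
  obtain ⟨μ, ⟨U, hU, hU0, hUfin⟩, hprev⟩ := h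
  rw [Prevalent, Shy] at hprev
  obtain ⟨T, hsub, hTm, ν, ⟨W, hW, hW0, hWfin⟩, hν⟩ := hprev
  have hUm : MeasurableSet U := hU.isClosed.measurableSet
  have hWm : MeasurableSet W := hW.isClosed.measurableSet
  set μ₁ : Measure V := μ.restrict U with hμ₁
  set ν₂ : Measure V := ν.restrict W with hν₂
  have : IsFiniteMeasure μ₁ := ⟨by rw [hμ₁, Measure.restrict_apply_univ]; exact hUfin⟩
  have h0 : μ₁ Uᶜ = 0 := by
    rw [hμ₁, Measure.restrict_apply hUm.compl, compl_inter_self, measure_empty]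
  -- the convolution kernel
  set F : V → Measure V := fun y => μ₁.map (fun x => x - y) with hF
  have hsubm : ∀ y : V, Measurable (fun x : V => x - y) :=
    fun y => (continuous_sub_right y).measurable
  have hFapp : ∀ (y : V) (E : Set V), MeasurableSet E → F y E = μ₁ ((fun x => x - y) ⁻¹' E) :=
    fun y E hE => Measure.map_apply (hsubm y) hE
  have hFmeas : Measurable F := by
    apply Measure.measurable_of_measurable_coe
    intro E hE
    have heq : (fun y => F y E) = (fun y : V => μ₁ ((fun x => x + y) ⁻¹' E)) ∘ Neg.neg := by
      funext y
      rw [hFapp y E hE]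
      simp only [Function.comp_apply]
      congr 1
      ext x
      simp [sub_eq_add_neg]
    rw [heq]
    exact (key_meas μ₁ hU h0 hE).comp continuous_neg.measurable
  set lam : Measure V := ν₂.bind F with hlam
  refine ⟨S, subset_rfl, hS, lam, ⟨(fun p : V × V => p.1 - p.2) '' (U ×ˢ W), ?_, ?_, ?_⟩, ?_⟩
  · exact (hU.prod hW).image continuous_sub
  · -- positivity
    set K := (fun p : V × V => p.1 - p.2) '' (U ×ˢ W) with hK
    have hKm : MeasurableSet K := (((hU.prod hW).image continuous_sub).isClosed).measurableSet
    rw [hlam, Measure.bind_apply hKm hFmeas.aemeasurable]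
    have hge : ∀ y : V, W.indicator (fun _ => μ U) y ≤ F y K := by
      intro y
      by_cases hy : y ∈ W
      · rw [indicator_of_mem hy]
        have hUsub : U ⊆ (fun x => x - y) ⁻¹' K := fun x hx => ⟨(x, y), ⟨hx, hy⟩, rfl⟩
        calc μ U = μ₁ U := (Measure.restrict_apply_self _ _).symm
          _ ≤ μ₁ ((fun x => x - y) ⁻¹' K) := measure_mono hUsub
          _ = F y K := (hFapp y K hKm).symm
      · rw [indicator_of_notMem hy]; exact zero_le
    have : μ U * ν W ≤ ∫⁻ y, F y K ∂ν₂ := by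
      calc μ U * ν W = μ U * ν₂ W := by rw [hν₂, Measure.restrict_apply_self]
        _ = ∫⁻ y in W, μ U ∂ν₂ := by rw [setLIntegral_const, mul_comm]
        _ = ∫⁻ y, W.indicator (fun _ => μ U) y ∂ν₂ := (lintegral_indicator hWm _).symm
        _ ≤ ∫⁻ y, F y K ∂ν₂ := lintegral_mono hge
    exact lt_of_lt_of_le (ENNReal.mul_pos hU0.ne' hW0.ne') this
  · -- finiteness
    set K := (fun p : V × V => p.1 - p.2) '' (U ×ˢ W) with hK
    have hKm : MeasurableSet K := (((hU.prod hW).image continuous_sub).isClosed).measurableSet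
    rw [hlam, Measure.bind_apply hKm hFmeas.aemeasurable]
    have hle : ∀ y : V, F y K ≤ μ U := by
      intro y
      calc F y K = μ₁ ((fun x => x - y) ⁻¹' K) := hFapp y K hKm
        _ ≤ μ₁ univ := measure_mono (subset_univ _)
        _ = μ U := by rw [hμ₁, Measure.restrict_apply_univ]
    calc ∫⁻ y, F y K ∂ν₂ ≤ ∫⁻ _, μ U ∂ν₂ := lintegral_mono hle
      _ = μ U * ν₂ univ := by rw [lintegral_const]
      _ = μ U * ν W := by rw [hν₂, Measure.restrict_apply_univ]
      _ < ⊤ := ENNReal.mul_lt_top hUfin hWfin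
  · -- null translates
    intro v
    have hEm : MeasurableSet ((fun x => x + v) '' S) := by
      rw [image_add_eq_preimage]
      exact hS.preimage (hsubm v)
    rw [hlam, Measure.bind_apply hEm hFmeas.aemeasurable]
    -- a.e. vanishing
    have hB : ν ((fun t => t + (-v)) '' T) = 0 := hν (-v)
    have hB2 : ν₂ ((fun t => t + (-v)) '' T) = 0 :=
      le_antisymm (le_trans (Measure.le_iff'.1 Measure.restrict_le_self _) hB.le) (zero_le)
    have hae : ∀ᵐ y ∂ν₂, y ∉ (fun t => t + (-v)) '' T :=
      measure_eq_zero_iff_ae_notMem.mp hB2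
    refine le_antisymm ?_ (zero_le)
    have : ∫⁻ y, F y ((fun x => x + v) '' S) ∂ν₂ = ∫⁻ _, 0 ∂ν₂ := by
      apply lintegral_congr_ae
      filter_upwards [hae] with y hy
      have hyv : y + v ∉ T := by
        intro hyT
        exact hy ⟨y + v, hyT, by simp⟩
      have hynot : μ ((fun x => x + (y + v)) '' S) = 0 := by
        by_contra hne
        exact hyv (hsub hne)
      have hset : (fun x => x - y) ⁻¹' ((fun x => x + v) '' S)
          = (fun x => x + (y + v)) '' S := by
        rw [image_add_eq_preimage, image_add_eq_preimage, preimage_preimage]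
        ext x
        simp [sub_sub]
      refine le_antisymm ?_ (zero_le)
      calc F y ((fun x => x + v) '' S) = μ₁ ((fun x => x - y) ⁻¹' ((fun x => x + v) '' S)) :=
            hFapp y _ hEm
        _ = μ₁ ((fun x => x + (y + v)) '' S) := by rw [hset]
        _ ≤ μ ((fun x => x + (y + v)) '' S) := Measure.le_iff'.1 Measure.restrict_le_self _
        _ = 0 := hynot
      -- need equality to 0, but we have ≤ 0; fix below
    rw [this, lintegral_zero]
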